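/- (Baumgartner) Let λ be an uncountable regular cardinal and F = {i_{αβ} : B_α → B_β : α ≤ β < λ} be a complete iteration system such that B_α is <λ-cc for every α < λ, and such that the set S = {α < λ : ⋃_{β<α} i_{βα}[B_β] is dense in B_α} (i.e. B_α is the boolean completion of the direct limit C(F↾α)) is stationary in λ. Then C(F) is <λ-cc. -/

import Mathlib

/-- A complete iteration system of complete Boolean algebras indexed by `ι`:
regular embeddings `emb : B a → B b` for `a ≤ b` (injective Boolean algebra
homomorphisms preserving arbitrary suprema) which commute and are the identity
on the diagonal. -/
structure IterSys (ι : Type*) [Preorder ι] where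
  B : ι → Type
  cba : ∀ a, CompleteBooleanAlgebra (B a)
  emb : ∀ {a b : ι}, a ≤ b → B a → B b
  emb_refl : ∀ (a : ι) (x : B a), emb (le_refl a) x = x
  emb_trans : ∀ {a b c : ι} (hab : a ≤ b) (hbc : b ≤ c) (x : B a),
    emb hbc (emb hab x) = emb (hab.trans hbc) x
  emb_inj : ∀ {a b : ι} (h : a ≤ b), Function.Injective (emb h)
  emb_sSup : ∀ {a b : ι} (h : a ≤ b) (S : Set (B a)), emb h (sSup S) = sSup (emb h '' S)
  emb_inf : ∀ {a b : ι} (h : a ≤ b) (x y : B a), emb h (x ⊓ y) = emb h x ⊓ emb h y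
  emb_compl : ∀ {a b : ι} (h : a ≤ b) (x : B a), emb h xᶜ = (emb h x)ᶜ
  emb_top : ∀ {a b : ι} (h : a ≤ b), emb h (⊤ : B a) = (⊤ : B b)

attribute [instance] IterSys.cba

namespace IterSys

variable {ι : Type*} [Preorder ι] (F : IterSys ι)

/-- The retraction `π_{a b}` associated to the regular embedding `i_{a b}`. -/
def ret {a b : ι} (h : a ≤ b) (c : F.B b) : F.B a :=
  sInf {x : F.B a | c ≤ F.emb h x}

/-- A thread of the iteration system (an element of the inverse limit `T(F)`). -/
def IsThread (f : ∀ a, F.B a) : Prop :=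
  ∀ {a b : ι} (h : a ≤ b), F.ret h (f b) = f a

/-- A constant thread (an element of the direct limit `C(F)`). -/
def IsConstThread (f : ∀ a, F.B a) : Prop :=
  F.IsThread f ∧ ∃ a : ι, ∀ (b : ι) (h : a ≤ b), f b = F.emb h (f a)

/-- The pointwise order on threads. -/
def ThreadLE (f g : ∀ a, F.B a) : Prop := ∀ a, f a ≤ g a

/-- A thread is nonzero if some (equivalently, cofinally many) of its coordinates
are nonzero. -/
def NonzeroThread (f : ∀ a, F.B a) : Prop := ∃ a, f a ≠ ⊥

/-- Two threads are compatible in `T(F)` if some nonzero thread lies below both. -/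
def Compat (f g : ∀ a, F.B a) : Prop :=
  ∃ h, F.IsThread h ∧ F.NonzeroThread h ∧ F.ThreadLE h f ∧ F.ThreadLE h g

/-- Two constant threads are compatible in `C(F)` if some nonzero constant thread
lies below both. -/
def ConstCompat (f g : ∀ a, F.B a) : Prop :=
  ∃ h, F.IsConstThread h ∧ F.NonzeroThread h ∧ F.ThreadLE h f ∧ F.ThreadLE h g

end IterSys

namespace IterSys

variable {ι : Type*} [Preorder ι] (F : IterSys ι)

-- helpers
lemma emb_mono {a b : ι} (h : a ≤ b) {x y : F.B a} (hxy : x ≤ y) :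
    F.emb h x ≤ F.emb h y := by
  have h1 : F.emb h (x ⊓ y) = F.emb h x := by rw [inf_eq_left.2 hxy]
  rw [F.emb_inf] at h1
  exact inf_eq_left.1 h1

lemma emb_bot {a b : ι} (h : a ≤ b) : F.emb h (⊥ : F.B a) = ⊥ := by
  have h1 := F.emb_sSup h ∅
  simpa using h1

lemma emb_le_emb_iff {a b : ι} (h : a ≤ b) {x y : F.B a} :
    F.emb h x ≤ F.emb h y ↔ x ≤ y := by
  constructor
  · intro hh
    have h1 : F.emb h (x ⊓ y) = F.emb h x := by rw [F.emb_inf]; exact inf_eq_left.2 hh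
    exact inf_eq_left.1 (F.emb_inj h h1)
  · exact F.emb_mono h

lemma emb_sInf {a b : ι} (h : a ≤ b) (S : Set (F.B a)) :
    F.emb h (sInf S) = sInf (F.emb h '' S) := by
  apply compl_injective
  have hc : (F.emb h ∘ Compl.compl) = (Compl.compl ∘ F.emb h) :=
    funext fun x => F.emb_compl h x
  rw [← F.emb_compl, compl_sInf', compl_sInf', F.emb_sSup, ← Set.image_comp, ← Set.image_comp, hc]

lemma le_emb_ret {a b : ι} (h : a ≤ b) (c : F.B b) : c ≤ F.emb h (F.ret h c) := by
  rw [ret, F.emb_sInf]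
  apply le_sInf
  rintro x ⟨y, hy, rfl⟩
  exact hy

lemma ret_le_iff {a b : ι} {h : a ≤ b} {c : F.B b} {x : F.B a} :
    F.ret h c ≤ x ↔ c ≤ F.emb h x :=
  ⟨fun hh => (F.le_emb_ret h c).trans (F.emb_mono h hh), fun hh => sInf_le hh⟩

lemma ret_emb {a b : ι} (h : a ≤ b) (x : F.B a) : F.ret h (F.emb h x) = x := by
  apply le_antisymm
  · exact F.ret_le_iff.2 le_rfl
  · apply le_sInf
    intro y hy
    exact (F.emb_le_emb_iff h).1 hy

lemma ret_mono {a b : ι} (h : a ≤ b) {c d : F.B b} (hcd : c ≤ d) :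
    F.ret h c ≤ F.ret h d :=
  F.ret_le_iff.2 (hcd.trans (F.le_emb_ret h d))

lemma ret_ret {a b c : ι} (hab : a ≤ b) (hbc : b ≤ c) (z : F.B c) :
    F.ret hab (F.ret hbc z) = F.ret (hab.trans hbc) z := by
  apply le_antisymm
  · rw [ret_le_iff, ret_le_iff, F.emb_trans]
    exact F.le_emb_ret _ z
  · rw [ret_le_iff, ← F.emb_trans hab hbc]
    exact (F.le_emb_ret hbc z).trans (F.emb_mono hbc (F.le_emb_ret hab (F.ret hbc z)))

lemma ret_refl (a : ι) (w : F.B a) : F.ret (le_refl a) w = w := by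
  conv_lhs => rw [show w = F.emb (le_refl a) w from (F.emb_refl a w).symm]
  exact F.ret_emb (le_refl a) w

lemma ret_bot {a b : ι} (h : a ≤ b) : F.ret h (⊥ : F.B b) = ⊥ :=
  le_bot_iff.1 (F.ret_le_iff.2 bot_le)

lemma ret_ne_bot {a b : ι} (h : a ≤ b) {c : F.B b} (hc : c ≠ ⊥) : F.ret h c ≠ ⊥ := by
  intro hh
  apply hc
  have h1 := F.le_emb_ret h c
  rw [hh, F.emb_bot] at h1
  exact le_bot_iff.1 h1

lemma emb_inf_ne_bot {a b : ι} (h : a ≤ b) {c : F.B a} {d : F.B b}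
    (hc : c ≠ ⊥) (hcd : c ≤ F.ret h d) : F.emb h c ⊓ d ≠ ⊥ := by
  intro hbot
  have hd : d ≤ (F.emb h c)ᶜ := le_compl_iff_disjoint_left.2 (disjoint_iff.2 hbot)
  have h1 : F.ret h d ≤ cᶜ := by
    have h2 := F.ret_mono h hd
    rwa [← F.emb_compl, F.ret_emb] at h2
  have hcc : c ≤ cᶜ := hcd.trans h1
  apply hc
  have : c ⊓ cᶜ = c := inf_eq_left.2 hcc
  rw [inf_compl_eq_bot'] at this
  exact this.symm

lemma const_above {f : ∀ a, F.B a} {s u : ι}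
    (hs : ∀ (b : ι) (h : s ≤ b), f b = F.emb h (f s)) (hsu : s ≤ u) :
    ∀ (b : ι) (h : u ≤ b), f b = F.emb h (f u) := by
  intro b h
  rw [hs b (hsu.trans h), hs u hsu, F.emb_trans]

end IterSys

namespace IterSys

variable {ι : Type*} [LinearOrder ι] (F : IterSys ι)

def genThread (a : ι) (w : F.B a) : ∀ b, F.B b := fun b =>
  if h : a ≤ b then F.emb h w else F.ret (le_of_not_ge h) w

lemma genThread_of_le {a b : ι} (hab : a ≤ b) (w : F.B a) :
    F.genThread a w b = F.emb hab w := by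
  simp only [genThread, dif_pos hab]

lemma genThread_self (a : ι) (w : F.B a) : F.genThread a w a = w := by
  rw [F.genThread_of_le le_rfl, F.emb_refl]

lemma genThread_of_ge {a b : ι} (hba : b ≤ a) (w : F.B a) :
    F.genThread a w b = F.ret hba w := by
  by_cases h : a ≤ b
  · obtain rfl : b = a := le_antisymm hba h
    rw [F.genThread_self, F.ret_refl]
  · simp only [genThread, dif_neg h]

lemma genThread_isConstThread (a : ι) (w : F.B a) : F.IsConstThread (F.genThread a w) := by
  constructor
  · intro x y hxy
    by_cases hax : a ≤ x
    · have hay : a ≤ y := hax.trans hxy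
      rw [F.genThread_of_le hay, F.genThread_of_le hax, ← F.emb_trans hax hxy, F.ret_emb]
    · have hxa : x ≤ a := le_of_not_ge hax
      rw [F.genThread_of_ge hxa]
      by_cases hay : a ≤ y
      · rw [F.genThread_of_le hay]
        rw [show F.ret hxy (F.emb hay w) = F.ret hxa (F.ret hay (F.emb hay w)) from
          (F.ret_ret hxa hay _).symm, F.ret_emb]
      · have hya : y ≤ a := le_of_not_ge hay
        rw [F.genThread_of_ge hya, F.ret_ret hxy hya]
  · refine ⟨a, fun b h => ?_⟩
    rw [F.genThread_of_le h, F.genThread_self]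

lemma genThread_le {a : ι} {w : F.B a} {f : ∀ c, F.B c} (hft : F.IsThread f)
    (hfa : ∀ (b : ι) (h : a ≤ b), f b = F.emb h (f a)) (hw : w ≤ f a) :
    F.ThreadLE (F.genThread a w) f := by
  intro c
  by_cases h : a ≤ c
  · rw [F.genThread_of_le h, hfa c h]
    exact F.emb_mono h hw
  · have hca : c ≤ a := le_of_not_ge h
    rw [F.genThread_of_ge hca, ← hft hca]
    exact F.ret_mono hca hw

lemma coords_ne_bot {f : ∀ a, F.B a} (hf : F.IsConstThread f)
    (hne : ∃ a, f a ≠ ⊥) : ∀ c, f c ≠ ⊥ := by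
  obtain ⟨ht, s, hs⟩ := hf
  obtain ⟨a, ha⟩ := hne
  have hsb : f s ≠ ⊥ := by
    rcases le_total a s with h | h
    · intro hb; apply ha; rw [← ht h, hb, F.ret_bot]
    · intro hb; apply ha; rw [hs a h, hb, F.emb_bot]
  intro c
  rcases le_total c s with h | h
  · rw [← ht h]; exact F.ret_ne_bot h hsb
  · rw [hs c h]
    intro hb
    exact hsb (F.emb_inj h (by rw [hb, F.emb_bot]))

lemma main_compat {f g : ∀ a, F.B a} (hft : F.IsThread f) (hgt : F.IsThread g)
    {γ δ δ' u t : ι} (hγδ : γ ≤ δ) (hδu : δ ≤ u) (huδ' : u ≤ δ') (hδ't : δ' ≤ t)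
    (hfu : ∀ (b : ι) (h : u ≤ b), f b = F.emb h (f u))
    (hgt' : ∀ (b : ι) (h : t ≤ b), g b = F.emb h (g t))
    {y y' : F.B γ} (hz : y ⊓ y' ≠ ⊥)
    (h1 : F.emb hγδ y ≤ f δ)
    (h2 : F.emb ((hγδ.trans hδu).trans huδ') y' ≤ g δ') :
    F.ConstCompat f g := by
  have hγu : γ ≤ u := hγδ.trans hδu
  have hut : u ≤ t := huδ'.trans hδ't
  have hembz : F.emb hγδ (y ⊓ y') ≠ ⊥ := fun hb => hz (F.emb_inj hγδ (by rw [hb, F.emb_bot]))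
  have h4 : F.emb hγδ (y ⊓ y') ≤ F.ret hδu (f u) := by
    rw [hft hδu]
    exact le_trans (F.emb_mono hγδ inf_le_left) h1
  have ha' : F.emb hγu (y ⊓ y') ⊓ f u ≠ ⊥ := by
    have h5 := F.emb_inf_ne_bot hδu hembz h4
    rwa [F.emb_trans hγδ hδu] at h5
  have hr1 : F.emb hγu y' ≤ F.ret hut (g t) := by
    have e1 : F.ret hut (g t) = F.ret huδ' (g δ') := by
      rw [← F.ret_ret huδ' hδ't, hgt hδ't]
    rw [e1]
    calc F.emb hγu y' = F.ret huδ' (F.emb huδ' (F.emb hγu y')) := (F.ret_emb huδ' _).symm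
      _ = F.ret huδ' (F.emb (hγu.trans huδ') y') := by rw [F.emb_trans]
      _ ≤ F.ret huδ' (g δ') := F.ret_mono huδ' h2
  have ha'le : (F.emb hγu (y ⊓ y') ⊓ f u) ≤ F.ret hut (g t) :=
    le_trans (le_trans inf_le_left (F.emb_mono hγu inf_le_right)) hr1
  have hw : F.emb hut (F.emb hγu (y ⊓ y') ⊓ f u) ⊓ g t ≠ ⊥ := F.emb_inf_ne_bot hut ha' ha'le
  refine ⟨F.genThread t (F.emb hut (F.emb hγu (y ⊓ y') ⊓ f u) ⊓ g t),
    F.genThread_isConstThread _ _, ⟨t, by rw [F.genThread_self]; exact hw⟩, ?_, ?_⟩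
  · apply F.genThread_le hft (F.const_above hfu hut)
    have h6 : F.emb hut (F.emb hγu (y ⊓ y') ⊓ f u) ≤ f t := by
      rw [hfu t hut]
      exact F.emb_mono hut inf_le_right
    exact le_trans inf_le_left h6
  · exact F.genThread_le hgt hgt' inf_le_right

end IterSys



/-- A club subset of a (well-ordered) index set: cofinal, and closed under existing
least upper bounds of its nonempty subsets. -/
def IsClubIn {ι : Type*} [LinearOrder ι] (C : Set ι) : Prop :=
  (∀ x : ι, ∃ y ∈ C, x ≤ y) ∧
  ∀ T ⊆ C, T.Nonempty → ∀ z : ι, IsLUB T z → z ∈ C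

/-- A stationary subset of the index set: one meeting every club. -/
def IsStationaryIn {ι : Type*} [LinearOrder ι] (S : Set ι) : Prop :=
  ∀ C : Set ι, IsClubIn C → (S ∩ C).Nonempty

section ClubHelpers

open Cardinal

variable {ι : Type} [LinearOrder ι] [WellFoundedLT ι] {κ : Cardinal}

lemma exists_isLUB' (T : Set ι) (hne : T.Nonempty) (x : ι) (hx : ∀ t ∈ T, t ≤ x) :
    ∃ z, IsLUB T z := by
  have hU : (upperBounds T).Nonempty := ⟨x, fun t ht => hx t ht⟩
  refine ⟨(wellFounded_lt : WellFounded ((· < ·) : ι → ι → Prop)).min (upperBounds T) hU,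
    WellFounded.min_mem _ _ _, fun v hv => ?_⟩
  exact not_lt.1 (WellFounded.not_lt_min _ _ hv)

variable (hreg : κ.IsRegular) (hunc : Cardinal.aleph0 < κ)
  (hcard : Cardinal.mk ι = κ) (hinit : ∀ x : ι, Cardinal.mk {y : ι // y < x} < κ)

include hreg hunc hinit in
lemma seg_lt (w : ι) : #{y : ι | y ≤ w} < κ := by
  calc #{y : ι | y ≤ w} ≤ #(insert w {y : ι | y < w} : Set ι) := by
        apply mk_le_mk_of_subset
        intro y hy
        rcases lt_or_eq_of_le (hy : y ≤ w) with h | h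
        · exact Set.mem_insert_iff.2 (Or.inr h)
        · exact Set.mem_insert_iff.2 (Or.inl h)
    _ ≤ #{y : ι | y < w} + 1 := mk_insert_le
    _ < κ := add_lt_of_lt hreg.aleph0_le (hinit w) (one_lt_aleph0.trans hunc)

include hreg hunc hcard hinit in
lemma bounded_of_card_lt (T : Set ι) (hT : #T < κ) : ∃ x, ∀ t ∈ T, t ≤ x := by
  by_contra hb
  push_neg at hb
  have hcov : (Set.univ : Set ι) ⊆ ⋃ t : T, {y : ι | y ≤ (t : ι)} := by
    intro y _
    obtain ⟨t, ht, hy⟩ := hb y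
    exact Set.mem_iUnion.2 ⟨⟨t, ht⟩, hy.le⟩
  have h2 : #ι ≤ #T * ⨆ t : T, #{y : ι | y ≤ (t : ι)} := by
    calc #ι = #(Set.univ : Set ι) := mk_univ.symm
      _ ≤ #(⋃ t : T, {y : ι | y ≤ (t : ι)}) := mk_le_mk_of_subset hcov
      _ ≤ _ := mk_iUnion_le _
  have h3 : ⨆ t : T, #{y : ι | y ≤ (t : ι)} < κ :=
    iSup_lt_of_isRegular hreg hT (fun t => seg_lt hreg hunc hinit (t : ι))
  have h4 := mul_lt_of_lt hreg.aleph0_le hT h3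
  have h5 := h2.trans_lt h4
  rw [hcard] at h5
  exact lt_irrefl κ h5

include hreg hunc hcard hinit in
lemma exists_gt' (x : ι) : ∃ y, x < y := by
  by_contra hb
  push_neg at hb
  have hinj : Function.Injective
      (fun y : ι => if h : y < x then some (⟨y, h⟩ : {y : ι // y < x}) else none) := by
    intro yy zz hyz
    dsimp only at hyz
    by_cases h1 : yy < x <;> by_cases h2 : zz < x <;> simp [h1, h2] at hyz
    · exact hyz
    · exact (le_antisymm (hb yy) (not_lt.1 h1)).trans (le_antisymm (not_lt.1 h2) (hb zz))
  have h6 : #ι ≤ #{y : ι // y < x} + 1 := by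
    have h7 := mk_le_of_injective hinj
    rwa [mk_option] at h7
  rw [hcard] at h6
  exact absurd h6 (not_le.2 (add_lt_of_lt hreg.aleph0_le (hinit x) (one_lt_aleph0.trans hunc)))

include hreg hunc hcard hinit in
lemma card_ge_of_cofinal (T : Set ι) (hT : ∀ x, ∃ t ∈ T, x ≤ t) : κ ≤ #T := by
  by_contra h
  push_neg at h
  obtain ⟨x, hx⟩ := bounded_of_card_lt hreg hunc hcard hinit T h
  obtain ⟨y, hy⟩ := exists_gt' hreg hunc hcard hinit x
  obtain ⟨t, ht, hyt⟩ := hT y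
  exact absurd (hyt.trans (hx t ht)) (not_le.2 hy)

include hreg hunc hcard hinit in
lemma countable_bdd (u : ℕ → ι) : ∃ x, ∀ n, u n ≤ x := by
  obtain ⟨x, hx⟩ := bounded_of_card_lt hreg hunc hcard hinit (Set.range u)
    ((mk_range_le.trans (le_of_eq mk_nat)).trans_lt hunc)
  exact ⟨x, fun n => hx _ ⟨n, rfl⟩⟩

include hreg hunc hcard hinit in
lemma closure_club (g : ι → ι) : IsClubIn {δ : ι | ∀ j, j < δ → g j < δ} := by
  constructor
  · intro x
    have hnext : ∀ w : ι, ∃ v : ι, w < v ∧ ∀ j, j ≤ w → g j < v := by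
      intro w
      obtain ⟨b, hb⟩ := bounded_of_card_lt hreg hunc hcard hinit
        (insert w (g '' {j : ι | j ≤ w}))
        (lt_of_le_of_lt mk_insert_le (add_lt_of_lt hreg.aleph0_le
          (lt_of_le_of_lt mk_image_le (seg_lt hreg hunc hinit w))
          (one_lt_aleph0.trans hunc)))
      obtain ⟨v, hv⟩ := exists_gt' hreg hunc hcard hinit b
      exact ⟨v, lt_of_le_of_lt (hb w (Set.mem_insert _ _)) hv,
        fun j hj => lt_of_le_of_lt (hb _ (Set.mem_insert_iff.2 (Or.inr ⟨j, hj, rfl⟩))) hv⟩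
    choose nxt hlt hdom using hnext
    set u : ℕ → ι := fun n => Nat.rec (nxt x) (fun _ ih => nxt ih) n with hu
    obtain ⟨bd, hbd⟩ := countable_bdd hreg hunc hcard hinit u
    obtain ⟨zz, hz⟩ := exists_isLUB' (Set.range u) ⟨u 0, ⟨0, rfl⟩⟩ bd
      (by rintro t ⟨n, rfl⟩; exact hbd n)
    refine ⟨zz, ?_, ?_⟩
    · intro j hj
      have hnall : ¬ ∀ n, u n ≤ j := by
        intro hall
        exact absurd (hz.2 (by rintro t ⟨n, rfl⟩; exact hall n)) (not_le.2 hj)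
      push_neg at hnall
      obtain ⟨n, hn⟩ := hnall
      have h8 : g j < u (n + 1) := hdom (u n) j hn.le
      exact h8.trans_le (hz.1 ⟨n + 1, rfl⟩)
    · exact le_of_lt (lt_of_lt_of_le (hlt x) (hz.1 ⟨0, rfl⟩))
  · intro T hT hne zz hz j hj
    have hnall : ¬ ∀ t ∈ T, t ≤ j := by
      intro hall
      exact absurd (hz.2 fun t ht => hall t ht) (not_le.2 hj)
    push_neg at hnall
    obtain ⟨t, ht, hjt⟩ := hnall
    exact lt_of_lt_of_le (hT ht j hjt) (hz.1 ht)

include hreg hunc hcard hinit in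
lemma club_inter (C C' : Set ι) (hC : IsClubIn C) (hC' : IsClubIn C') :
    IsClubIn (C ∩ C') := by
  obtain ⟨hC1, hC2⟩ := hC
  obtain ⟨hC1', hC2'⟩ := hC'
  constructor
  · intro x
    choose φ hφC hφle using hC1
    choose ψ hψC hψle using hC1'
    set c : ℕ → ι := fun n => Nat.rec (φ x) (fun _ ih => φ (ψ ih)) n with hcdef
    obtain ⟨bd, hbd⟩ := countable_bdd hreg hunc hcard hinit c
    obtain ⟨zz, hz⟩ := exists_isLUB' (Set.range c) ⟨c 0, ⟨0, rfl⟩⟩ bd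
      (by rintro t ⟨n, rfl⟩; exact hbd n)
    have hzC : zz ∈ C := by
      refine hC2 (Set.range c) ?_ ⟨c 0, ⟨0, rfl⟩⟩ zz hz
      rintro t ⟨n, rfl⟩
      cases n with
      | zero => exact hφC x
      | succ m => exact hφC _
    have hlubd : IsLUB (Set.range (fun n => ψ (c n))) zz := by
      constructor
      · rintro t ⟨n, rfl⟩
        exact le_trans (hφle (ψ (c n))) (hz.1 ⟨n + 1, rfl⟩)
      · intro v hv
        apply hz.2
        rintro t ⟨n, rfl⟩
        exact le_trans (hψle (c n)) (hv ⟨n, rfl⟩)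
    have hzC' : zz ∈ C' := by
      refine hC2' _ ?_ (Set.range_nonempty _) zz hlubd
      rintro t ⟨n, rfl⟩
      exact hψC (c n)
    exact ⟨zz, ⟨hzC, hzC'⟩, le_trans (hφle x) (hz.1 ⟨0, rfl⟩)⟩
  · intro T hT hne zz hz
    exact ⟨hC2 T (fun t ht => (hT ht).1) hne zz hz, hC2' T (fun t ht => (hT ht).2) hne zz hz⟩

include hreg hunc hcard hinit in
lemma fodor_lite (S₀ : Set ι) (hS : ∀ C : Set ι, IsClubIn C → (S₀ ∩ C).Nonempty)
    (bF : ι → ι) (hb : ∀ δ ∈ S₀, bF δ < δ) :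
    ∃ γ, ∀ x, ∃ δ, (δ ∈ S₀ ∧ bF δ = γ) ∧ x ≤ δ := by
  by_contra hcon
  push_neg at hcon
  choose β hβ using hcon
  obtain ⟨δ, hδS, hδC⟩ := hS {δ : ι | ∀ j, j < δ → β j < δ}
    (closure_club hreg hunc hcard hinit β)
  have h1 : bF δ < δ := hb δ hδS
  have h2 : β (bF δ) < δ := hδC (bF δ) h1
  have h3 := hβ (bF δ) δ ⟨hδS, rfl⟩
  exact absurd (h2.trans h3) (lt_irrefl _)

end ClubHelpers

open Cardinal

/-- Baumgartner: Let `λ` be an uncountable regular cardinal (realized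
as a well-order `ι` of cardinality `κ` whose proper initial segments have size `< κ`)
and `F` a complete iteration system indexed by `ι` such that each `B α` is `<κ`-cc
and the set `S = {α : ⋃_{β<α} i_{βα}[B β]` is dense in `B α}` is stationary.  Then
the direct limit `C(F)` is `<κ`-cc: every antichain of constant threads has
cardinality `< κ`. -/
theorem stmt10 (ι : Type) [LinearOrder ι] [WellFoundedLT ι]
    (κ : Cardinal) (hreg : κ.IsRegular) (hunc : Cardinal.aleph0 < κ)
    (hcard : Cardinal.mk ι = κ)
    (hinit : ∀ x : ι, Cardinal.mk {y : ι // y < x} < κ)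
    (F : IterSys ι)
    (hccB : ∀ (a : ι) (A : Set (F.B a)),
      (∀ x ∈ A, ∀ y ∈ A, x ≠ y → x ⊓ y = ⊥) → Cardinal.mk A < κ)
    (hstat : IsStationaryIn {a : ι | ∀ x : F.B a, x ≠ ⊥ →
      ∃ b : ι, ∃ hb : b < a, ∃ y : F.B b,
        F.emb hb.le y ≠ ⊥ ∧ F.emb hb.le y ≤ x}) :
    ∀ A : Set (∀ a, F.B a), (∀ f ∈ A, F.IsConstThread f) →
      (∀ f ∈ A, ∀ g ∈ A, f ≠ g → ¬ F.ConstCompat f g) → Cardinal.mk A < κ := by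
  classical
  intro A hA hanti
  by_contra hbig
  push_neg at hbig
  -- restrict to nonzero threads
  have hA'k : κ ≤ #(A \ {(fun _ => ⊥ : ∀ a, F.B a)} : Set (∀ a, F.B a)) := by
    by_contra h
    push_neg at h
    have hsub : A ⊆ (A \ {(fun _ => ⊥ : ∀ a, F.B a)}) ∪ {(fun _ => ⊥ : ∀ a, F.B a)} := by
      intro x hx
      by_cases hxz : x = (fun _ => ⊥ : ∀ a, F.B a)
      · exact Or.inr hxz
      · exact Or.inl ⟨hx, hxz⟩
    have h9 : #A ≤ #(A \ {(fun _ => ⊥ : ∀ a, F.B a)} : Set (∀ a, F.B a)) + 1 := by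
      calc #A ≤ #((A \ {(fun _ => ⊥ : ∀ a, F.B a)}) ∪ {(fun _ => ⊥ : ∀ a, F.B a)} :
            Set (∀ a, F.B a)) := mk_le_mk_of_subset hsub
        _ ≤ _ + #({(fun _ => ⊥ : ∀ a, F.B a)} : Set (∀ a, F.B a)) := mk_union_le _ _
        _ = _ + 1 := by rw [mk_singleton]
    exact absurd hbig (not_le.2 (lt_of_le_of_lt h9
      (add_lt_of_lt hreg.aleph0_le h (one_lt_aleph0.trans hunc))))
  obtain ⟨e⟩ : Nonempty (ι ↪ ↥(A \ {(fun _ => ⊥ : ∀ a, F.B a)} : Set (∀ a, F.B a))) := by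
    rw [← Cardinal.le_def]
    rw [hcard]
    exact hA'k
  set ff : ι → (∀ a, F.B a) := fun i => (e i : ∀ a, F.B a) with hffdef
  have hffA : ∀ i, ff i ∈ A := fun i => (e i).2.1
  have hffne : ∀ i, ff i ≠ (fun _ => ⊥ : ∀ a, F.B a) := fun i => (e i).2.2
  have hffinj : Function.Injective ff := fun i j hij => e.injective (Subtype.ext hij)
  have hct : ∀ i, F.IsConstThread (ff i) := fun i => hA _ (hffA i)
  have hnz : ∀ i c, ff i c ≠ ⊥ := by
    intro i
    apply F.coords_ne_bot (hct i)
    by_contra hcon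
    push_neg at hcon
    exact hffne i (funext hcon)
  -- supports
  choose sp hsp using fun i => (hct i).2
  have hClclub : IsClubIn {δ : ι | ∀ j, j < δ → sp j < δ} :=
    closure_club hreg hunc hcard hinit sp
  set S₀ : Set ι := {a : ι | ∀ x : F.B a, x ≠ ⊥ →
      ∃ b : ι, ∃ hb : b < a, ∃ y : F.B b,
        F.emb hb.le y ≠ ⊥ ∧ F.emb hb.le y ≤ x} ∩ {δ : ι | ∀ j, j < δ → sp j < δ} with hS₀def
  have hS₀stat : ∀ C : Set ι, IsClubIn C → (S₀ ∩ C).Nonempty := by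
    intro C hC
    obtain ⟨δ, h1, h2, h3⟩ := hstat ({δ : ι | ∀ j, j < δ → sp j < δ} ∩ C)
      (club_inter hreg hunc hcard hinit _ _ hClclub hC)
    exact ⟨δ, ⟨h1, h2⟩, h3⟩
  -- choose b and y at each point of S₀
  have hD : ∀ δ : ι, ∃ b : ι, ∃ hb : b ≤ δ, ∃ y : F.B b,
      (δ ∈ S₀ → b < δ ∧ F.emb hb y ≠ ⊥ ∧ F.emb hb y ≤ ff δ δ) := by
    intro δ
    by_cases hδ : δ ∈ S₀
    · obtain ⟨b, hb, y, hy1, hy2⟩ := hδ.1 (ff δ δ) (hnz δ δ)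
      exact ⟨b, hb.le, y, fun _ => ⟨hb, hy1, hy2⟩⟩
    · exact ⟨δ, le_rfl, ⊥, fun h => absurd h hδ⟩
  choose bF hble yF hspec using hD
  obtain ⟨γ, hγ⟩ := fodor_lite hreg hunc hcard hinit S₀ hS₀stat bF
    (fun δ h => (hspec δ h).1)
  have hFibcof : ∀ x, ∃ δ ∈ {δ : ι | δ ∈ S₀ ∧ bF δ = γ}, x ≤ δ := by
    intro x
    obtain ⟨δ, h1, h2⟩ := hγ x
    exact ⟨δ, h1, h2⟩
  have hkey : ∀ δ ∈ {δ : ι | δ ∈ S₀ ∧ bF δ = γ}, ∃ y : F.B γ, ∃ hγδ : γ ≤ δ,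
      γ < δ ∧ F.emb hγδ y ≠ ⊥ ∧ F.emb hγδ y ≤ ff δ δ := by
    rintro δ ⟨h1, h2⟩
    subst h2
    obtain ⟨hlt, h3, h4⟩ := hspec δ h1
    exact ⟨yF δ, hble δ, hlt, h3, h4⟩
  have hkey' : ∀ δ : ι, ∃ y : F.B γ, δ ∈ {δ : ι | δ ∈ S₀ ∧ bF δ = γ} →
      ∃ hγδ : γ ≤ δ, γ < δ ∧ F.emb hγδ y ≠ ⊥ ∧ F.emb hγδ y ≤ ff δ δ := by
    intro δ
    by_cases h : δ ∈ {δ : ι | δ ∈ S₀ ∧ bF δ = γ}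
    · obtain ⟨y, hy⟩ := hkey δ h
      exact ⟨y, fun _ => hy⟩
    · exact ⟨⊥, fun hh => absurd hh h⟩
  choose yγ hyγ using hkey'
  have hpair : ∃ δ ∈ {δ : ι | δ ∈ S₀ ∧ bF δ = γ}, ∃ δ' ∈ {δ : ι | δ ∈ S₀ ∧ bF δ = γ},
      δ ≠ δ' ∧ yγ δ ⊓ yγ δ' ≠ ⊥ := by
    by_contra hcon
    push_neg at hcon
    have hinjOn : Set.InjOn yγ {δ : ι | δ ∈ S₀ ∧ bF δ = γ} := by
      intro d1 h1 d2 h2 heq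
      by_contra hne
      have hb := hcon d1 h1 d2 h2 hne
      rw [heq, inf_idem] at hb
      obtain ⟨hγδ, _, hne2, _⟩ := hyγ d2 h2
      exact hne2 (by rw [hb, F.emb_bot])
    have hanti2 : ∀ x ∈ yγ '' {δ : ι | δ ∈ S₀ ∧ bF δ = γ},
        ∀ y ∈ yγ '' {δ : ι | δ ∈ S₀ ∧ bF δ = γ}, x ≠ y → x ⊓ y = ⊥ := by
      rintro _ ⟨d1, h1, rfl⟩ _ ⟨d2, h2, rfl⟩ hne
      exact hcon d1 h1 d2 h2 (fun hdd => hne (by rw [hdd]))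
    have h5 : #(yγ '' {δ : ι | δ ∈ S₀ ∧ bF δ = γ}) < κ := hccB γ _ hanti2
    rw [mk_image_eq_of_injOn _ _ hinjOn] at h5
    exact absurd (card_ge_of_cofinal hreg hunc hcard hinit _ hFibcof) (not_le.2 h5)
  obtain ⟨δ, hδF, δ', hδ'F, hne, hmeet⟩ := hpair
  have final : ∀ d d' : ι, d ∈ {δ : ι | δ ∈ S₀ ∧ bF δ = γ} →
      d' ∈ {δ : ι | δ ∈ S₀ ∧ bF δ = γ} → d < d' → yγ d ⊓ yγ d' ≠ ⊥ → False := by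
    intro d d' hdF hd'F hdd' hm
    obtain ⟨hγd, hγdlt, hy1ne, hy1le⟩ := hyγ d hdF
    obtain ⟨hγd', hγd'lt, hy2ne, hy2le⟩ := hyγ d' hd'F
    have hspd : sp d < d' := hd'F.1.2 d hdd'
    have hdu : d ≤ max (sp d) d := le_max_right _ _
    have hud' : max (sp d) d ≤ d' := max_le hspd.le hdd'.le
    have hd't : d' ≤ max (sp d') d' := le_max_right _ _
    have hfu := F.const_above (hsp d) (le_max_left (sp d) d)
    have hgtc := F.const_above (hsp d') (le_max_left (sp d') d')
    have hcompat := F.main_compat (hct d).1 (hct d').1 hγd hdu hud' hd't hfu hgtc hm hy1le hy2le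
    exact hanti (ff d) (hffA d) (ff d') (hffA d') (hffinj.ne (ne_of_lt hdd')) hcompat
  rcases hne.lt_or_gt with h | h
  · exact final δ δ' hδF hδ'F h hmeet
  · exact final δ' δ hδ'F hδF h (by rwa [inf_comm] at hmeet)
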